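/- arXiv:1109.6391 — 2 statements merged into one kernel-verified Lean document; each statement's English description precedes it below -/
import Mathlib

section
/- (Mass conservation) Consider the iteration on a directed graph G=(V,E): z_j[k+1] = Σ_{(j,i)∈E} (τ_{ji}[k] - τ_{ji}[k-1]), where σ_{ji}[k] = σ_{ji}[k-1] + z_i[k]/D_i^+ for (j,i)∈E, τ_{ji}[k] = σ_{ji}[k] if x_{ji}[k]=1 and τ_{ji}[k] = τ_{ji}[k-1] if x_{ji}[k]=0, with σ_{ji}[-1]=τ_{ji}[-1]=0 and x_{ji}[k] ∈ {0,1} arbitrary. Define M_{k+1} := Σ_j z_j[k+1] + Σ_{(j,i)∈E} (σ_{ji}[k] - τ_{ji}[k-1])(1 - x_{ji}[k]). Then M_{k+1} = Σ_j z_j[0] for all k ≥ 0. -/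
open Finset

/-- Mass conservation for the robust broadcast iteration.  Here `sig k` and `tau k`
represent `σ[k-1]` and `τ[k-1]` (so that `sig 0 = tau 0 = 0` encode the initial
conditions `σ[-1] = τ[-1] = 0`), `z k` is the state at time `k`, `x k j i` is the
link-activation indicator of link `(j,i)` at time `k`, and `D i` is the out-degree
of node `i`. -/
theorem stmt_17 {n : ℕ} (Adj : Fin n → Fin n → Prop) [DecidableRel Adj]
    (hself : ∀ j, Adj j j)
    (D : Fin n → ℕ) (hD : ∀ i, D i = (univ.filter fun l => Adj l i).card)
    (x : ℕ → Fin n → Fin n → Bool)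
    (z : ℕ → Fin n → ℝ) (sig tau : ℕ → Fin n → Fin n → ℝ)
    (hsig0 : ∀ j i, sig 0 j i = 0) (htau0 : ∀ j i, tau 0 j i = 0)
    (hsig : ∀ k j i, Adj j i → sig (k + 1) j i = sig k j i + z k i / (D i))
    (htau : ∀ k j i, Adj j i →
      tau (k + 1) j i = if x k j i then sig (k + 1) j i else tau k j i)
    (hz : ∀ k j, z (k + 1) j = ∑ i, if Adj j i then tau (k + 1) j i - tau k j i else 0) :
    ∀ k, (∑ j, z (k + 1) j)
        + (∑ j, ∑ i, if Adj j i then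
            (if x k j i then 0 else sig (k + 1) j i - tau k j i) else 0)
      = ∑ j, z 0 j := by
  have hDpos : ∀ i : Fin n, (D i : ℝ) ≠ 0 := by
    intro i
    have : 0 < D i := by
      rw [hD]
      exact Finset.card_pos.mpr ⟨i, by simp [hself i]⟩
    exact_mod_cast this.ne'
  -- summing z k i / D i over all in-neighbors j of i gives z k i
  have hsum : ∀ k, (∑ j : Fin n, ∑ i : Fin n, if Adj j i then z k i / D i else 0)
      = ∑ i, z k i := by
    intro k
    rw [Finset.sum_comm]
    refine Finset.sum_congr rfl fun i _ => ?_
    rw [Finset.sum_ite, Finset.sum_const_zero, Finset.sum_const, add_zero,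
      nsmul_eq_mul, ← hD i]
    rw [mul_div_assoc'] ; exact mul_div_cancel_left₀ _ (hDpos i)
  -- rewrite the LHS as a single double sum
  have hM : ∀ k, (∑ j, z (k + 1) j)
        + (∑ j, ∑ i, if Adj j i then
            (if x k j i then 0 else sig (k + 1) j i - tau k j i) else 0)
      = ∑ j, ∑ i, if Adj j i then sig (k + 1) j i - tau k j i else 0 := by
    intro k
    rw [← Finset.sum_add_distrib]
    refine Finset.sum_congr rfl fun j _ => ?_
    rw [hz, ← Finset.sum_add_distrib]
    refine Finset.sum_congr rfl fun i _ => ?_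
    by_cases h : Adj j i
    · simp only [h, if_true, htau k j i h]
      by_cases hx : x k j i <;> simp [hx]
    · simp [h]
  have hS : ∀ k, (∑ j, ∑ i, if Adj j i then sig (k + 1) j i - tau k j i else 0)
      = ∑ j, z 0 j := by
    intro k
    induction k with
    | zero =>
      have := hsum 0
      rw [← this]
      refine Finset.sum_congr rfl fun j _ => Finset.sum_congr rfl fun i _ => ?_
      by_cases h : Adj j i
      · simp only [h, if_true, hsig 0 j i h, hsig0, htau0]; ring
      · simp [h]
    | succ k ih =>
      have key : (∑ j, ∑ i, if Adj j i then sig (k + 2) j i - tau (k + 1) j i else 0)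
          = (∑ j, ∑ i, if Adj j i then z (k + 1) i / D i else 0)
            + (∑ j, ∑ i, if Adj j i then
                (if x k j i then 0 else sig (k + 1) j i - tau k j i) else 0) := by
        rw [← Finset.sum_add_distrib]
        refine Finset.sum_congr rfl fun j _ => ?_
        rw [← Finset.sum_add_distrib]
        refine Finset.sum_congr rfl fun i _ => ?_
        by_cases h : Adj j i
        · simp only [h, if_true, hsig (k + 1) j i h, htau k j i h]
          by_cases hx : x k j i <;> simp [hx] <;> ring
        · simp [h]
      rw [key, hsum (k + 1), hM k]
      exact ih
  intro k
  rw [hM k, hS k]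
end

section
/- (Nonnegativity of states) With the iteration of the previous mass-conservation statement and z_j[0] ≥ 0 for all j, one has z_j[k] ≥ 0, σ_{ji}[k] ≥ τ_{ji}[k-1] ≥ 0, and the pending mass (σ_{ji}[k] - τ_{ji}[k-1])(1-x_{ji}[k]) ≥ 0, for all j, all (j,i) ∈ E, and all k ≥ 0. -/
open Finset

/-- Nonnegativity of states for the robust broadcast iteration.  Here `sig k` and `tau k`
represent `σ[k-1]` and `τ[k-1]` (so that `sig 0 = tau 0 = 0` encode the initial
conditions `σ[-1] = τ[-1] = 0`), `z k` is the state at time `k`, `x k j i` is the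
link-activation indicator of link `(j,i)` at time `k`, and `D i` is the out-degree
of node `i`. -/
theorem stmt_18 {n : ℕ} (Adj : Fin n → Fin n → Prop) [DecidableRel Adj]
    (hself : ∀ j, Adj j j)
    (D : Fin n → ℕ) (hD : ∀ i, D i = (univ.filter fun l => Adj l i).card)
    (x : ℕ → Fin n → Fin n → Bool)
    (z : ℕ → Fin n → ℝ) (sig tau : ℕ → Fin n → Fin n → ℝ)
    (hsig0 : ∀ j i, sig 0 j i = 0) (htau0 : ∀ j i, tau 0 j i = 0)
    (hsig : ∀ k j i, Adj j i → sig (k + 1) j i = sig k j i + z k i / (D i))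
    (htau : ∀ k j i, Adj j i →
      tau (k + 1) j i = if x k j i then sig (k + 1) j i else tau k j i)
    (hz : ∀ k j, z (k + 1) j = ∑ i, if Adj j i then tau (k + 1) j i - tau k j i else 0)
    (hz0 : ∀ j, 0 ≤ z 0 j) :
    (∀ k j, 0 ≤ z k j) ∧
    (∀ k j i, Adj j i → 0 ≤ tau k j i) ∧
    (∀ k j i, Adj j i → tau k j i ≤ sig (k + 1) j i) ∧
    (∀ k j i, Adj j i →
      0 ≤ (if x k j i then 0 else sig (k + 1) j i - tau k j i)) := by
  have key : ∀ k, (∀ j, 0 ≤ z k j) ∧ (∀ j i, Adj j i → 0 ≤ tau k j i) ∧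
      (∀ j i, Adj j i → tau k j i ≤ sig (k + 1) j i) := by
    intro k
    induction k with
    | zero =>
      refine ⟨hz0, fun j i _ => (htau0 j i).ge, fun j i h => ?_⟩
      rw [htau0, hsig 0 j i h, hsig0]
      have : (0:ℝ) ≤ z 0 i / (D i) := div_nonneg (hz0 i) (by positivity)
      linarith
    | succ k ih =>
      obtain ⟨ihz, iht, ihts⟩ := ih
      have hznn : ∀ j, 0 ≤ z (k + 1) j := by
        intro j
        rw [hz]
        apply Finset.sum_nonneg
        intro i _
        by_cases h : Adj j i
        · simp only [h, if_true]
          rw [htau k j i h]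
          by_cases hx : x k j i
          · simp only [hx, if_true]; linarith [ihts j i h]
          · simp only [hx, Bool.false_eq_true, if_false]; linarith
        · simp [h]
      have htnn : ∀ j i, Adj j i → 0 ≤ tau (k + 1) j i := by
        intro j i h
        rw [htau k j i h]
        by_cases hx : x k j i
        · simp only [hx, if_true]; linarith [ihts j i h, iht j i h]
        · simp only [hx, Bool.false_eq_true, if_false]; exact iht j i h
      refine ⟨hznn, htnn, fun j i h => ?_⟩
      have hs : tau (k + 1) j i ≤ sig (k + 1) j i := by
        rw [htau k j i h]
        by_cases hx : x k j i
        · simp [hx]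
        · simp only [hx, Bool.false_eq_true, if_false]; exact ihts j i h
      rw [hsig (k+1) j i h]
      have : (0:ℝ) ≤ z (k+1) i / (D i) := div_nonneg (hznn i) (by positivity)
      linarith
  refine ⟨fun k => (key k).1, fun k => (key k).2.1, fun k => (key k).2.2, fun k j i h => ?_⟩
  by_cases hx : x k j i
  · simp [hx]
  · simp only [hx, Bool.false_eq_true, if_false]
    linarith [(key k).2.2 j i h]
end
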